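/- Let Hypotheses (C) and (D) hold, let u ∈ W^{1,1}(0,T; X) and x₀ ∈ X with x₀ ∈ Z(g(0, u(0), u(0) − x₀)), and let ξ ∈ W^{1,1}(0,T; X) solve the implicit (state-dependent) sweeping process (SGP) with data (u, x₀). Then |ξ'(t)| ≤ (1/(1 − δ))·( (1 + ωK₁/c)|u'(t)| + (K₁/c)a(t) ) for a.e. t ∈ (0,T). -/

import Mathlib

open MeasureTheory Set Filter Metric
open scoped RealInnerProductSpace Topology

/-- `f ∈ W^{1,1}(0,T;Y)` with a.e. derivative `f'`: `f'` is Bochner integrable on `(0,T)`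
and `f t = f 0 + ∫₀ᵗ f'` on `[0,T]`. -/
def IsW11 {Y : Type*} [NormedAddCommGroup Y] [NormedSpace ℝ Y] (T : ℝ) (f f' : ℝ → Y) : Prop :=
  IntegrableOn f' (Ioo 0 T) ∧ ∀ t ∈ Icc 0 T, f t = f 0 + ∫ s in (0:ℝ)..t, f' s

/-- Quadratic Taylor-type bound along lines for a function with directional derivatives
given by a Lipschitz family of continuous linear maps. -/
lemma line_quad_bound {E F : Type*} [NormedAddCommGroup E] [NormedSpace ℝ E]
    [NormedAddCommGroup F] [NormedSpace ℝ F]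
    (f : E → F) (df : E → E →L[ℝ] F) (C : ℝ) (hC : 0 ≤ C)
    (hd : ∀ x y, HasDerivAt (fun t : ℝ => f (x + t • y)) (df x y) 0)
    (hlip : ∀ x x', ‖df x - df x'‖ ≤ C * ‖x - x'‖)
    (x h : E) : ‖f (x + h) - f x - df x h‖ ≤ C * ‖h‖ ^ 2 := by
  have hline : ∀ ε : ℝ, HasDerivAt (fun τ : ℝ => f (x + τ • h)) (df (x + ε • h) h) ε := by
    intro ε
    have h1 := hd (x + ε • h) h
    have h2 : HasDerivAt (fun τ : ℝ => τ - ε) 1 ε := (hasDerivAt_id ε).sub_const ε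
    have h3 := HasDerivAt.scomp_of_eq ε h1 h2 (sub_self ε).symm
    have heq : ((fun t : ℝ => f (x + ε • h + t • h)) ∘ fun τ : ℝ => τ - ε)
        = fun τ : ℝ => f (x + τ • h) := by
      funext τ
      simp only [Function.comp_apply]
      congr 1
      rw [sub_smul]
      abel
    rw [heq] at h3
    simpa using h3
  set ψ : ℝ → F := fun ε => f (x + ε • h) - ε • (df x h) with hψdef
  have hψ : ∀ ε ∈ Icc (0:ℝ) 1,
      HasDerivWithinAt ψ (df (x + ε • h) h - df x h) (Icc 0 1) ε := by
    intro ε _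
    have := (hline ε).sub ((hasDerivAt_id ε).smul_const (df x h))
    rw [one_smul] at this
    exact this.hasDerivWithinAt
  have bound : ∀ ε ∈ Icc (0:ℝ) 1, ‖df (x + ε • h) h - df x h‖ ≤ C * ‖h‖ ^ 2 := by
    intro ε hε
    have e1 : df (x + ε • h) h - df x h = (df (x + ε • h) - df x) h := by simp
    rw [e1]
    calc ‖(df (x + ε • h) - df x) h‖ ≤ ‖df (x + ε • h) - df x‖ * ‖h‖ :=
          ContinuousLinearMap.le_opNorm _ _
      _ ≤ (C * ‖ε • h‖) * ‖h‖ := by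
          apply mul_le_mul_of_nonneg_right _ (norm_nonneg _)
          have := hlip (x + ε • h) x
          simpa using this
      _ ≤ C * ‖h‖ ^ 2 := by
          rw [norm_smul, Real.norm_eq_abs]
          have habs : |ε| ≤ 1 := abs_le.2 ⟨by linarith [hε.1], hε.2⟩
          have h4 : |ε| * ‖h‖ ≤ ‖h‖ := by nlinarith [norm_nonneg h, abs_nonneg ε]
          calc C * (|ε| * ‖h‖) * ‖h‖ ≤ C * ‖h‖ * ‖h‖ :=
                mul_le_mul_of_nonneg_right (mul_le_mul_of_nonneg_left h4 hC) (norm_nonneg h)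
            _ = C * ‖h‖ ^ 2 := by ring
  have key := (convex_Icc (0:ℝ) 1).norm_image_sub_le_of_norm_hasDerivWithin_le
    hψ bound (left_mem_Icc.2 zero_le_one) (right_mem_Icc.2 zero_le_one)
  have e0 : ψ 0 = f x := by simp [hψdef]
  have e1 : ψ 1 = f (x + h) - df x h := by simp [hψdef]
  rw [e0, e1] at key
  calc ‖f (x + h) - f x - df x h‖ = ‖f (x + h) - df x h - f x‖ := by rw [sub_right_comm]
    _ ≤ C * ‖h‖ ^ 2 * ‖(1:ℝ) - 0‖ := key
    _ = C * ‖h‖ ^ 2 := by simp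

/-- From a uniform quadratic expansion bound, joint Fréchet differentiability. -/
lemma hasFDerivAt_of_quad {E F : Type*} [NormedAddCommGroup E] [NormedSpace ℝ E]
    [NormedAddCommGroup F] [NormedSpace ℝ F]
    (f : E → F) (p₀ : E) (L : E →L[ℝ] F) (K : ℝ) (hK : 0 ≤ K)
    (hq : ∀ p : E, ‖f p - f p₀ - L (p - p₀)‖ ≤ K * ‖p - p₀‖ ^ 2) :
    HasFDerivAt f L p₀ := by
  rw [hasFDerivAt_iff_isLittleO_nhds_zero]
  rw [Asymptotics.isLittleO_iff]
  intro c hc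
  have : ∀ᶠ (h : E) in 𝓝 0, ‖h‖ ≤ c / (K + 1) := by
    have : 0 < c / (K + 1) := by positivity
    filter_upwards [Metric.ball_mem_nhds (0:E) this] with h hh
    rw [mem_ball, dist_zero_right] at hh
    exact le_of_lt hh
  filter_upwards [this] with h hh
  have h1 := hq (p₀ + h)
  simp only [add_sub_cancel_left] at h1
  calc ‖f (p₀ + h) - f p₀ - L h‖ ≤ K * ‖h‖ ^ 2 := h1
    _ ≤ (K + 1) * ‖h‖ * ‖h‖ := by nlinarith [norm_nonneg h]
    _ ≤ (K + 1) * (c / (K + 1)) * ‖h‖ := by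
        apply mul_le_mul_of_nonneg_right _ (norm_nonneg _)
        apply mul_le_mul_of_nonneg_left hh (by positivity)
    _ = c * ‖h‖ := by field_simp

/-- Joint Fréchet differentiability from partial quadratic expansions. -/
lemma joint_hasFDerivAt {E₁ E₂ F : Type*} [NormedAddCommGroup E₁] [NormedSpace ℝ E₁]
    [NormedAddCommGroup E₂] [NormedSpace ℝ E₂] [NormedAddCommGroup F] [NormedSpace ℝ F]
    (f : E₁ → E₂ → F) (d1 : E₁ → E₂ → E₁ →L[ℝ] F) (d2 : E₁ → E₂ → E₂ →L[ℝ] F)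
    (C1 C1' C2 : ℝ) (hC1 : 0 ≤ C1) (hC1' : 0 ≤ C1') (hC2 : 0 ≤ C2)
    (q1 : ∀ x y h, ‖f (x + h) y - f x y - d1 x y h‖ ≤ C1 * ‖h‖ ^ 2)
    (q2 : ∀ x y k, ‖f x (y + k) - f x y - d2 x y k‖ ≤ C2 * ‖k‖ ^ 2)
    (lip1 : ∀ x y y', ‖d1 x y - d1 x y'‖ ≤ C1' * ‖y - y'‖)
    (x₀ : E₁) (y₀ : E₂) :
    HasFDerivAt (fun p : E₁ × E₂ => f p.1 p.2)
      ((d1 x₀ y₀).comp (ContinuousLinearMap.fst ℝ E₁ E₂) +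
        (d2 x₀ y₀).comp (ContinuousLinearMap.snd ℝ E₁ E₂)) (x₀, y₀) := by
  apply hasFDerivAt_of_quad _ _ _ (4 * (C1 + C1' + C2)) (by positivity)
  rintro ⟨x, y⟩
  have hh : ‖x - x₀‖ ≤ ‖(x, y) - (x₀, y₀)‖ := norm_fst_le ((x, y) - (x₀, y₀))
  have hk : ‖y - y₀‖ ≤ ‖(x, y) - (x₀, y₀)‖ := norm_snd_le ((x, y) - (x₀, y₀))
  have split : f x y - f x₀ y₀ -
      ((d1 x₀ y₀).comp (ContinuousLinearMap.fst ℝ E₁ E₂) +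
        (d2 x₀ y₀).comp (ContinuousLinearMap.snd ℝ E₁ E₂)) ((x, y) - (x₀, y₀))
      = (f x y - f x₀ y - d1 x₀ y (x - x₀)) + ((d1 x₀ y - d1 x₀ y₀) (x - x₀))
        + (f x₀ y - f x₀ y₀ - d2 x₀ y₀ (y - y₀)) := by
    simp only [ContinuousLinearMap.add_apply, ContinuousLinearMap.comp_apply,
      ContinuousLinearMap.coe_fst', ContinuousLinearMap.coe_snd',
      Prod.mk_sub_mk, ContinuousLinearMap.sub_apply]
    abel
  rw [split]
  have e1 : f x y - f x₀ y - d1 x₀ y (x - x₀) =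
      f (x₀ + (x - x₀)) y - f x₀ y - d1 x₀ y (x - x₀) := by rw [add_sub_cancel]
  have e2 : f x₀ y - f x₀ y₀ - d2 x₀ y₀ (y - y₀) =
      f x₀ (y₀ + (y - y₀)) - f x₀ y₀ - d2 x₀ y₀ (y - y₀) := by rw [add_sub_cancel]
  have b1 : ‖f x y - f x₀ y - d1 x₀ y (x - x₀)‖ ≤ C1 * ‖x - x₀‖ ^ 2 := by
    rw [e1]; exact q1 x₀ y (x - x₀)
  have b2 : ‖(d1 x₀ y - d1 x₀ y₀) (x - x₀)‖ ≤ C1' * ‖y - y₀‖ * ‖x - x₀‖ :=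
    le_trans (ContinuousLinearMap.le_opNorm _ _)
      (mul_le_mul_of_nonneg_right (lip1 x₀ y y₀) (norm_nonneg _))
  have b3 : ‖f x₀ y - f x₀ y₀ - d2 x₀ y₀ (y - y₀)‖ ≤ C2 * ‖y - y₀‖ ^ 2 := by
    rw [e2]; exact q2 x₀ y₀ (y - y₀)
  have hN : (0:ℝ) ≤ ‖(x, y) - (x₀, y₀)‖ := norm_nonneg _
  calc ‖_ + _ + _‖ ≤ ‖f x y - f x₀ y - d1 x₀ y (x - x₀)‖ + ‖(d1 x₀ y - d1 x₀ y₀) (x - x₀)‖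
        + ‖f x₀ y - f x₀ y₀ - d2 x₀ y₀ (y - y₀)‖ := norm_add₃_le
    _ ≤ C1 * ‖x - x₀‖ ^ 2 + C1' * ‖y - y₀‖ * ‖x - x₀‖ + C2 * ‖y - y₀‖ ^ 2 := by
        exact add_le_add (add_le_add b1 b2) b3
    _ ≤ 4 * (C1 + C1' + C2) * ‖(x, y) - (x₀, y₀)‖ ^ 2 := by
        nlinarith [mul_le_mul hh hh (norm_nonneg (x - x₀)) hN,
          mul_le_mul hk hk (norm_nonneg (y - y₀)) hN,
          mul_le_mul hk hh (norm_nonneg (x - x₀)) hN,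
          norm_nonneg (x - x₀), norm_nonneg (y - y₀), hN]

lemma theta_hasDerivAt {X W : Type*} [NormedAddCommGroup X] [NormedSpace ℝ X]
    [NormedAddCommGroup W] [NormedSpace ℝ W] [CompleteSpace W]
    (T : ℝ) (g : ℝ → X → X → W) (gt : ℝ → X → X → W) (b : ℝ → ℝ)
    (hgt : ∀ (uu ξξ : X), ∀ τ ∈ Icc (0:ℝ) T,
      HasDerivWithinAt (fun τ => g τ uu ξξ) (gt τ uu ξξ) (Icc 0 T) τ)
    (hbint : IntegrableOn b (Ioo 0 T))
    (hgtint : ∀ uu ξξ : X, IntegrableOn (fun τ => gt τ uu ξξ) (Ioo 0 T))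
    (hlip₃ : ∀ᵐ τ ∂(volume.restrict (Ioo 0 T)), ∀ (uu ξξ vv ηη : X),
      ‖gt τ uu ξξ - gt τ vv ηη‖ ≤ b τ * (‖uu - vv‖ + ‖ξξ - ηη‖))
    (u ξ : ℝ → X) (u't ξ't : X) (t : ℝ) (htI : t ∈ Ioo 0 T)
    (hu : HasDerivAt u u't t) (hξ : HasDerivAt ξ ξ't t)
    (D : X × X →L[ℝ] W)
    (hjoint : HasFDerivAt (fun p : X × X => g t p.1 p.2) D (u t, ξ t)) :
    HasDerivAt (fun s => g s (u s) (ξ s)) (gt t (u t) (ξ t) + D (u't, ξ't)) t := by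
  have huIoc : ∀ s ∈ Ioo (0:ℝ) T, uIoc t s ⊆ Ioo 0 T := by
    intro s hs τ hτ
    rcases le_total t s with hts | hts
    · rw [uIoc_of_le hts] at hτ
      exact ⟨lt_trans htI.1 hτ.1, lt_of_le_of_lt hτ.2 hs.2⟩
    · rw [uIoc_of_ge hts] at hτ
      exact ⟨lt_trans hs.1 hτ.1, lt_of_le_of_lt hτ.2 htI.2⟩
  have hii : ∀ (uu ξξ : X), ∀ s ∈ Ioo (0:ℝ) T,
      IntervalIntegrable (fun τ => gt τ uu ξξ) volume t s := by
    intro uu ξξ s hs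
    rw [intervalIntegrable_iff]
    exact (hgtint uu ξξ).mono_set (huIoc s hs)
  have ftc : ∀ (uu ξξ : X), ∀ s ∈ Ioo (0:ℝ) T,
      (∫ τ in t..s, gt τ uu ξξ) = g s uu ξξ - g t uu ξξ := by
    intro uu ξξ
    have key : ∀ α ∈ Ioo (0:ℝ) T, ∀ β ∈ Ioo (0:ℝ) T, α ≤ β →
        (∫ τ in α..β, gt τ uu ξξ) = g β uu ξξ - g α uu ξξ := by
      intro α hα β hβ hab
      apply intervalIntegral.integral_eq_sub_of_hasDeriv_right_of_le hab
      · intro τ hτ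
        exact ((hgt uu ξξ τ ⟨le_trans (le_of_lt hα.1) hτ.1,
          le_trans hτ.2 (le_of_lt hβ.2)⟩).continuousWithinAt).mono
          (Icc_subset_Icc (le_of_lt hα.1) (le_of_lt hβ.2))
      · intro τ hτ
        have hτI : τ ∈ Ioo (0:ℝ) T := ⟨lt_trans hα.1 hτ.1, lt_trans hτ.2 hβ.2⟩
        exact (((hgt uu ξξ τ (Ioo_subset_Icc_self hτI)).hasDerivAt
          (Icc_mem_nhds hτI.1 hτI.2)).hasDerivWithinAt)
      · rw [intervalIntegrable_iff]
        apply (hgtint uu ξξ).mono_set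
        rw [uIoc_of_le hab]
        exact fun r hr => ⟨lt_trans hα.1 hr.1, lt_of_le_of_lt hr.2 hβ.2⟩
    intro s hs
    rcases le_total t s with hts | hts
    · exact key t htI s hs hts
    · rw [intervalIntegral.integral_symm, key s hs t htI hts]
      abel
  have h2 : HasDerivAt (fun s => g t (u s) (ξ s)) (D (u't, ξ't)) t :=
    hjoint.comp_hasDerivAt (f := fun s => (u s, ξ s)) t (hu.prodMk hξ)
  have h1 : HasDerivAt (fun s => g s (u t) (ξ t)) (gt t (u t) (ξ t)) t :=
    (hgt (u t) (ξ t) t (Ioo_subset_Icc_self htI)).hasDerivAt (Icc_mem_nhds htI.1 htI.2)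
  set R : ℝ → W := fun s => g s (u s) (ξ s) - g s (u t) (ξ t) - g t (u s) (ξ s) + g t (u t) (ξ t)
    with hRdef
  have hR : HasDerivAt R 0 t := by
    rw [hasDerivAt_iff_isLittleO]
    have hRt : R t = 0 := by simp [hRdef]
    simp only [hRt, smul_zero, sub_zero]
    set b1 : ℝ → ℝ := (Ioo 0 T).indicator (fun τ => |b τ|) with hb1def
    have hb1 : Integrable b1 :=
      (integrable_indicator_iff measurableSet_Ioo).2 hbint.abs
    have hB : Tendsto (fun s => ∫ τ in uIoc t s, b1 τ) (𝓝 t) (𝓝 0) := by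
      apply hb1.tendsto_setIntegral_nhds_zero
      have : Tendsto (fun s : ℝ => ENNReal.ofReal |s - t|) (𝓝 t) (𝓝 0) := by
        rw [show (0 : ENNReal) = ENNReal.ofReal 0 by simp]
        apply ENNReal.tendsto_ofReal
        have : Tendsto (fun s : ℝ => |s - t|) (𝓝 t) (𝓝 |t - t|) :=
          (continuous_abs.comp (continuous_id.sub continuous_const)).continuousAt
        simpa using this
      apply this.congr'
      filter_upwards with s
      simp only [Function.comp_apply]
      rw [uIoc, Real.volume_Ioc]
      congr 1
      rcases le_total t s with hts | hts
      · rw [min_eq_left hts, max_eq_right hts, abs_of_nonneg (by linarith)]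
      · rw [min_eq_right hts, max_eq_left hts, abs_of_nonpos (by linarith)]; ring
    have hbig : (fun s => ‖u s - u t‖ + ‖ξ s - ξ t‖) =O[𝓝 t] (fun s => s - t) :=
      hu.isBigO_sub.norm_left.add hξ.isBigO_sub.norm_left
    have hBo : (fun s => ∫ τ in uIoc t s, b1 τ) =o[𝓝 t] (fun _ : ℝ => (1:ℝ)) :=
(Asymptotics.isLittleO_one_iff ℝ).2 hB
    have hprod := hBo.mul_isBigO hbig
    simp only [one_mul] at hprod
    apply Asymptotics.IsBigO.trans_isLittleO _ hprod
    rw [Asymptotics.isBigO_iff]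
    use 1
    filter_upwards [isOpen_Ioo.eventually_mem htI] with s hs
    have e : R s = ∫ τ in t..s, (gt τ (u s) (ξ s) - gt τ (u t) (ξ t)) := by
      rw [intervalIntegral.integral_sub (hii _ _ s hs) (hii _ _ s hs)]
      rw [ftc _ _ s hs, ftc _ _ s hs]
      simp only [hRdef]
      abel
    have hnn : (0:ℝ) ≤ ‖u s - u t‖ + ‖ξ s - ξ t‖ := by positivity
    have step1 : ‖R s‖ ≤ ∫ τ in uIoc t s, ‖gt τ (u s) (ξ s) - gt τ (u t) (ξ t)‖ := by
      rw [e]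
      exact intervalIntegral.norm_integral_le_integral_norm_uIoc
    have hint0 : IntegrableOn (fun τ => ‖gt τ (u s) (ξ s) - gt τ (u t) (ξ t)‖) (Ioo 0 T) :=
      ((hgtint (u s) (ξ s)).sub (hgtint (u t) (ξ t))).norm
    have hint1 : IntegrableOn (fun τ => ‖gt τ (u s) (ξ s) - gt τ (u t) (ξ t)‖) (uIoc t s) :=
      hint0.mono_set (huIoc s hs)
    have hint2 : IntegrableOn (fun τ => b1 τ * (‖u s - u t‖ + ‖ξ s - ξ t‖)) (uIoc t s) :=
      (hb1.integrableOn.mono_set (huIoc s hs)).mul_const _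
    have hae : ∀ᵐ τ ∂(volume.restrict (uIoc t s)),
        ‖gt τ (u s) (ξ s) - gt τ (u t) (ξ t)‖ ≤ b1 τ * (‖u s - u t‖ + ‖ξ s - ξ t‖) := by
      have hres := ae_restrict_of_ae_restrict_of_subset (huIoc s hs) hlip₃
      have hmem : ∀ᵐ τ ∂(volume.restrict (uIoc t s)), τ ∈ uIoc t s :=
        ae_restrict_mem measurableSet_uIoc
      filter_upwards [hres, hmem] with τ hτ hτm
      calc ‖gt τ (u s) (ξ s) - gt τ (u t) (ξ t)‖ ≤ b τ * (‖u s - u t‖ + ‖ξ s - ξ t‖) :=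
            hτ (u s) (ξ s) (u t) (ξ t)
        _ ≤ b1 τ * (‖u s - u t‖ + ‖ξ s - ξ t‖) := by
            apply mul_le_mul_of_nonneg_right _ hnn
            rw [hb1def, indicator_of_mem (huIoc s hs hτm)]
            exact le_abs_self _
    have step2 : (∫ τ in uIoc t s, ‖gt τ (u s) (ξ s) - gt τ (u t) (ξ t)‖)
        ≤ ∫ τ in uIoc t s, b1 τ * (‖u s - u t‖ + ‖ξ s - ξ t‖) :=
      integral_mono_ae hint1 hint2 hae
    have step3 : (∫ τ in uIoc t s, b1 τ * (‖u s - u t‖ + ‖ξ s - ξ t‖))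
        = (∫ τ in uIoc t s, b1 τ) * (‖u s - u t‖ + ‖ξ s - ξ t‖) :=
      integral_mul_const _ _
    have hb1nn : 0 ≤ ∫ τ in uIoc t s, b1 τ := by
      apply integral_nonneg
      intro τ
      rw [hb1def]
      apply indicator_nonneg
      intro τ' _
      exact abs_nonneg _
    rw [one_mul, Real.norm_eq_abs, abs_of_nonneg (mul_nonneg hb1nn hnn)]
    calc ‖R s‖ ≤ _ := step1
      _ ≤ _ := step2
      _ = _ := step3
  have final := (hR.add h1).add h2
  have heq : (fun s => R s + g s (u t) (ξ t) + g t (u s) (ξ s)) =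
      fun s => g s (u s) (ξ s) + g t (u t) (ξ t) := by
    funext s
    simp only [hRdef]
    abel
  rw [show ((R + fun s => g s (u t) (ξ t)) + fun s => g t (u s) (ξ s)) =
      fun s => R s + g s (u t) (ξ t) + g t (u s) (ξ s) from rfl, heq] at final
  simpa using final.sub_const (g t (u t) (ξ t))

lemma hasDerivAt_line_of_tendsto_slope {E : Type*} [NormedAddCommGroup E] [NormedSpace ℝ E]
    (f : E → ℝ) (x y : E) (D : ℝ)
    (h : Tendsto (fun t : ℝ => (f (x + t • y) - f x) / t) (𝓝[≠] (0:ℝ)) (𝓝 D)) :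
    HasDerivAt (fun t : ℝ => f (x + t • y)) D 0 := by
  rw [hasDerivAt_iff_tendsto_slope]
  apply h.congr'
  filter_upwards [self_mem_nhdsWithin] with t ht
  rw [slope_def_field]
  simp

lemma hasDerivAt_line_of_fderiv {E F : Type*} [NormedAddCommGroup E] [NormedSpace ℝ E]
    [NormedAddCommGroup F] [NormedSpace ℝ F]
    (f : E → F) (L : E →L[ℝ] F) (v h : E) (hf : HasFDerivAt f L v) :
    HasDerivAt (fun s : ℝ => f (v + s • h)) (L h) 0 := by
  have h0 : HasDerivAt (fun s : ℝ => v + s • h) h 0 := by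
    simpa using ((hasDerivAt_id (0:ℝ)).smul_const h).const_add v
  have h1 : HasFDerivAt f L ((fun s : ℝ => v + s • h) 0) := by simpa using hf
  exact h1.comp_hasDerivAt 0 h0

/-- If a vector `p` has nonpositive inner product with every direction in the open half-space
`{y | ⟪n, y⟫ < 0}`, then it is a nonnegative multiple of `n`. -/
lemma eq_smul_of_halfspace {X : Type*} [NormedAddCommGroup X] [InnerProductSpace ℝ X]
    (n p : X) (hn : n ≠ 0) (hineq : ∀ y : X, ⟪n, y⟫ < 0 → ⟪y, p⟫ ≤ 0) :
    0 ≤ ⟪n, p⟫ ∧ p = (⟪n, p⟫ / ‖n‖ ^ 2) • n := by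
  have hnn : (0:ℝ) < ‖n‖ := norm_pos_iff.2 hn
  have hn2 : (0:ℝ) < ‖n‖ ^ 2 := by positivity
  have hκnn : 0 ≤ ⟪n, p⟫ := by
    have h1 : ⟪n, -n⟫ < 0 := by
      rw [inner_neg_right, real_inner_self_eq_norm_sq]
      linarith
    have := hineq (-n) h1
    rw [inner_neg_left] at this
    linarith
  refine ⟨hκnn, ?_⟩
  set κ := ⟪n, p⟫ / ‖n‖ ^ 2 with hκ
  set q := p - κ • n with hq
  have hqn : ⟪n, q⟫ = 0 := by
    rw [hq, inner_sub_right, real_inner_smul_right, real_inner_self_eq_norm_sq, hκ]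
    field_simp
    ring
  have key : ∀ ε : ℝ, 0 < ε → ‖q‖ ^ 2 ≤ ε * ⟪n, p⟫ := by
    intro ε hε
    have h1 : ⟪n, q - ε • n⟫ < 0 := by
      rw [inner_sub_right, hqn, real_inner_smul_right, real_inner_self_eq_norm_sq]
      nlinarith
    have h2 := hineq _ h1
    rw [inner_sub_left, real_inner_smul_left] at h2
    have h3 : ⟪q, p⟫ = ‖q‖ ^ 2 := by
      have : p = q + κ • n := by rw [hq]; abel
      have hqn' : ⟪q, n⟫ = 0 := by rw [real_inner_comm]; exact hqn
      rw [this, inner_add_right, real_inner_smul_right, hqn', real_inner_self_eq_norm_sq]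
      ring
    rw [h3] at h2
    have h4 : ⟪p, n⟫ = ⟪n, p⟫ := real_inner_comm n p
    nlinarith [h2]
  have hq0 : q = 0 := by
    rw [← norm_eq_zero]
    by_contra hne
    have hpos : 0 < ‖q‖ ^ 2 := by
      have := norm_nonneg q
      rcases lt_or_eq_of_le this with h | h
      · positivity
      · exact absurd h.symm hne
    rcases eq_or_lt_of_le hκnn with h | h
    · have := key 1 one_pos
      rw [← h] at this
      linarith
    · have := key (‖q‖ ^ 2 / (2 * ⟪n, p⟫)) (by positivity)
      have h5 : ‖q‖ ^ 2 / (2 * ⟪n, p⟫) * ⟪n, p⟫ = ‖q‖ ^ 2 / 2 := by field_simp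
      rw [h5] at this
      linarith
  have : p - κ • n = 0 := by rw [← hq, hq0]
  rw [sub_eq_zero] at this
  exact this

lemma isW11_ae_hasDerivAt {Y : Type*} [NormedAddCommGroup Y] [NormedSpace ℝ Y] [CompleteSpace Y]
    {T : ℝ} {f f' : ℝ → Y} (h : IsW11 T f f') :
    ∀ᵐ t ∂(volume.restrict (Ioo 0 T)), HasDerivAt f (f' t) t := by
  obtain ⟨hint, hrep⟩ := h
  set F : ℝ → Y := (Ioo 0 T).indicator f' with hF
  have hFi : Integrable F := (integrable_indicator_iff measurableSet_Ioo).2 hint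
  have hleb := IsUnifLocDoublingMeasure.ae_tendsto_average_norm_sub
    (μ := (volume : Measure ℝ)) hFi.locallyIntegrable 1
  rw [ae_restrict_iff' measurableSet_Ioo]
  filter_upwards [hleb] with t ht htI
  have hδ : Tendsto (fun s : ℝ => |s - t|) (𝓝[≠] t) (𝓝[>] 0) := by
    rw [tendsto_nhdsWithin_iff]
    constructor
    · have : Tendsto (fun s : ℝ => |s - t|) (𝓝 t) (𝓝 |t - t|) := by
        exact (continuous_abs.comp (continuous_id.sub continuous_const)).continuousAt
      simpa using this.mono_left nhdsWithin_le_nhds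
    · filter_upwards [self_mem_nhdsWithin] with s hs
      exact abs_pos.2 (sub_ne_zero.2 hs)
  have hmem : ∀ᶠ s in 𝓝[≠] t, t ∈ closedBall t (1 * |s - t|) := by
    filter_upwards with s
    simpa using abs_nonneg (s - t)
  have havg : Tendsto (fun s => ⨍ y in closedBall t |s - t|, ‖F y - F t‖) (𝓝[≠] t) (𝓝 0) :=
    ht (fun _ => t) (fun s => |s - t|) hδ hmem
  rw [hasDerivAt_iff_tendsto_slope]
  rw [tendsto_iff_norm_sub_tendsto_zero]
  have hIoo : ∀ᶠ s in 𝓝[≠] t, s ∈ Ioo 0 T :=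
    eventually_nhdsWithin_of_eventually_nhds (isOpen_Ioo.eventually_mem htI)
  apply squeeze_zero' (Eventually.of_forall fun s => norm_nonneg _)
    (g := fun s => 2 * ⨍ y in closedBall t |s - t|, ‖F y - F t‖)
  · filter_upwards [hIoo, self_mem_nhdsWithin] with s hsI hst
    have hμball : (volume (closedBall t |s - t|)).toReal = 2 * |s - t| := by
      rw [Real.volume_closedBall, ENNReal.toReal_ofReal (by positivity)]
    have hsub : uIoc t s ⊆ Ioo 0 T := by
      rcases le_total t s with hts | hts
      · rw [uIoc_of_le hts]
        exact fun r hr => ⟨lt_trans htI.1 hr.1, lt_of_le_of_lt hr.2 hsI.2⟩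
      · rw [uIoc_of_ge hts]
        exact fun r hr => ⟨lt_trans hsI.1 hr.1, lt_of_le_of_lt hr.2 htI.2⟩
    have hball : uIoc t s ⊆ closedBall t |s - t| := by
      intro r hr
      rw [mem_closedBall, Real.dist_eq]
      rcases le_total t s with hts | hts
      · rw [uIoc_of_le hts] at hr
        rw [abs_of_nonneg (sub_nonneg.2 hts)]
        rw [abs_le]; constructor <;> linarith [hr.1, hr.2]
      · rw [uIoc_of_ge hts] at hr
        rw [abs_of_nonpos (sub_nonpos.2 hts)]
        rw [abs_le]; constructor <;> linarith [hr.1, hr.2]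
    have hii : IntervalIntegrable f' volume t s := by
      rw [intervalIntegrable_iff]
      exact hint.mono_set hsub
    -- f s - f t = ∫ t..s f'
    have hrepst : f s - f t = ∫ r in t..s, f' r := by
      have h1 := hrep s ⟨le_of_lt hsI.1, le_of_lt hsI.2⟩
      have h2 := hrep t ⟨le_of_lt htI.1, le_of_lt htI.2⟩
      have hi0s : IntervalIntegrable f' volume 0 s := by
        rw [intervalIntegrable_iff]
        apply hint.mono_set
        rw [uIoc_of_le (le_of_lt hsI.1)]
        exact fun r hr => ⟨hr.1, lt_of_le_of_lt hr.2 hsI.2⟩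
      have hi0t : IntervalIntegrable f' volume 0 t := by
        rw [intervalIntegrable_iff]
        apply hint.mono_set
        rw [uIoc_of_le (le_of_lt htI.1)]
        exact fun r hr => ⟨hr.1, lt_of_le_of_lt hr.2 htI.2⟩
      rw [h1, h2]
      rw [add_sub_add_left_eq_sub]
      rw [← intervalIntegral.integral_interval_sub_left hi0s hi0t]
    have hFeq : ∀ r ∈ uIoc t s, f' r = F r := fun r hr =>
      (indicator_of_mem (hsub hr) f').symm
    have hFt : F t = f' t := indicator_of_mem htI f'
    have key : slope f t s - f' t = (s - t)⁻¹ • ∫ r in t..s, (F r - F t) := by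
      rw [slope_def_module, hrepst]
      have hFii : IntervalIntegrable F volume t s := by
        rw [intervalIntegrable_iff]
        exact hFi.integrableOn
      have : (∫ r in t..s, (F r - F t)) = (∫ r in t..s, f' r) - (s - t) • f' t := by
        rw [intervalIntegral.integral_sub hFii intervalIntegrable_const]
        rw [intervalIntegral.integral_const, hFt]
        congr 1
        apply intervalIntegral.integral_congr
        intro r hr
        have hrI : r ∈ Ioo 0 T := by
          rcases le_total t s with hts | hts
          · rw [uIcc_of_le hts] at hr
            exact ⟨lt_of_lt_of_le htI.1 hr.1, lt_of_le_of_lt hr.2 hsI.2⟩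
          · rw [uIcc_of_ge hts] at hr
            exact ⟨lt_of_lt_of_le hsI.1 hr.1, lt_of_le_of_lt hr.2 htI.2⟩
        exact indicator_of_mem hrI f'
      rw [this, smul_sub]
      congr 1
      rw [smul_smul, inv_mul_cancel₀ (sub_ne_zero.2 (fun hh => hst (by linarith [hh] : s = t))), one_smul]
    rw [key, norm_smul]
    have hnn : IntegrableOn (fun y => ‖F y - F t‖) (closedBall t |s - t|) volume :=
      (hFi.integrableOn.sub (integrableOn_const (by rw [Real.volume_closedBall]; exact ENNReal.ofReal_ne_top))).norm
    have h1 : ‖∫ r in t..s, (F r - F t)‖ ≤ ∫ y in closedBall t |s - t|, ‖F y - F t‖ := by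
      refine le_trans intervalIntegral.norm_integral_le_integral_norm_uIoc ?_
      exact setIntegral_mono_set hnn (Eventually.of_forall fun y => norm_nonneg _)
        (HasSubset.Subset.eventuallyLE hball)
    have hst' : (0:ℝ) < |s - t| := abs_pos.2 (sub_ne_zero.2 (fun hh => hst (by linarith [hh] : s = t)))
    have : ‖(s - t)⁻¹‖ = |s - t|⁻¹ := by rw [Real.norm_eq_abs, abs_inv]
    rw [this]
    calc |s - t|⁻¹ * ‖∫ r in t..s, (F r - F t)‖
        ≤ |s - t|⁻¹ * ∫ y in closedBall t |s - t|, ‖F y - F t‖ := by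
          exact mul_le_mul_of_nonneg_left h1 (by positivity)
      _ = 2 * ((2 * |s - t|)⁻¹ * ∫ y in closedBall t |s - t|, ‖F y - F t‖) := by
          field_simp
      _ ≤ _ := by rw [setAverage_eq, measureReal_def, hμball, smul_eq_mul]
  · simpa using havg.const_mul 2

/-- Solution of the implicit state-dependent sweeping process (SGP) with data `(u, x₀)`. -/
def IsSGPSol {X W : Type*} [NormedAddCommGroup X] [InnerProductSpace ℝ X]
    (T r : ℝ) (Zs : W → Set X) (g : ℝ → X → X → W) (u : ℝ → X) (x₀ : X) (ξ ξ' : ℝ → X) : Prop :=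
  (∀ t ∈ Icc 0 T, u t - ξ t ∈ Zs (g t (u t) (ξ t))) ∧ u 0 - ξ 0 = x₀ ∧
    ∀ᵐ t ∂(volume.restrict (Ioo 0 T)), ∀ z ∈ Zs (g t (u t) (ξ t)),
      ⟪(u t - ξ t) - z, ξ' t⟫ + ‖ξ' t‖ / (2 * r) * ‖(u t - ξ t) - z‖ ^ 2 ≥ 0

set_option maxHeartbeats 2000000 in
/-- Lemma 5.2 of the paper: a priori bound for the derivative of any solution of the
implicit (state-dependent) sweeping process, with `δ = K₁γ/c < 1`. -/
theorem implicit_apriori_bound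
    {X W : Type*} [NormedAddCommGroup X] [InnerProductSpace ℝ X] [CompleteSpace X]
    [NormedAddCommGroup W] [NormedSpace ℝ W] [CompleteSpace W]
    (G : X → W → ℝ) (hGnonneg : ∀ (x : X) (w : W), 0 ≤ G x w)
    (hGlip : LocallyLipschitz (fun p : X × W => G p.1 p.2))
    (Zs : W → Set X) (hZ : ∀ w, Zs w = {z : X | G z w ≤ 1})
    (Gx : X → W → X)
    (hgradx : ∀ w : W, ∀ z ∈ Zs w, ∀ y : X,
      Tendsto (fun t : ℝ => (G (z + t • y) w - G z w) / t) (𝓝[≠] (0:ℝ)) (𝓝 ⟪Gx z w, y⟫))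
    (lam c L : ℝ) (hlam : 0 < lam) (hc : 0 < c) (hL : 0 < L)
    (μ₁ : W → ℝ → ℝ) (μ₂ : ℝ → ℝ)
    (hμ₁zero : ∀ w, μ₁ w 0 = 0) (hμ₂zero : μ₂ 0 = 0)
    (hμ₁top : ∀ w, Tendsto (μ₁ w) atTop atTop) (hμ₂top : Tendsto μ₂ atTop atTop)
    (hyp1 : ∀ (x : X) (w : W), G x w = 1 → c ≤ ‖Gx x w‖)
    (hyp2 : ∀ w : W, ∀ x ∈ Zs w, ∀ y ∈ Zs w, ‖Gx x w - Gx y w‖ ≤ μ₁ w ‖x - y‖)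
    (hyp3 : ∀ w : W, ∀ x ∈ frontier (Zs w), ∀ z ∈ Zs w,
      ⟪Gx x w - Gx z w, x - z⟫ ≥ -lam * ‖x - z‖ ^ 2)
    (hyp4 : ∀ (x : X) (w w' : W), |G x w - G x w'| ≤ L * ‖w - w'‖)
    (hyp5 : ∀ ρ > (0:ℝ), ∀ (w : W) (x : X), ρ ≤ infDist x (Zs w) → μ₂ ρ ≤ G x w - 1)
    (Gw : X → W → StrongDual ℝ W)
    (hgradxall : ∀ (x : X) (w : W), ∀ y : X,
      Tendsto (fun t : ℝ => (G (x + t • y) w - G x w) / t) (𝓝[≠] (0:ℝ)) (𝓝 ⟪Gx x w, y⟫))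
    (hgradw : ∀ (x : X) (w : W) (v : W),
      Tendsto (fun t : ℝ => (G x (w + t • v) - G x w) / t) (𝓝[≠] (0:ℝ)) (𝓝 (Gw x w v)))
    (K₀ K₁ C₀ C₁ : ℝ) (hK₀ : 0 < K₀) (hK₁ : 0 < K₁) (hC₀ : 0 < C₀) (hC₁ : 0 < C₁)
    (hbdx : ∀ (x : X) (w : W), ‖Gx x w‖ ≤ K₀)
    (hbdw : ∀ (x : X) (w : W), ‖Gw x w‖ ≤ K₁)
    (hlipx : ∀ (x x' : X) (w w' : W), ‖Gx x w - Gx x' w'‖ ≤ C₀ * (‖x - x'‖ + ‖w - w'‖))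
    (hlipw : ∀ (x x' : X) (w w' : W), ‖Gw x w - Gw x' w'‖ ≤ C₁ * (‖x - x'‖ + ‖w - w'‖))
    (T : ℝ) (hT : 0 < T)
    (g : ℝ → X → X → W)
    (hgcont : ContinuousOn (fun p : ℝ × X × X => g p.1 p.2.1 p.2.2)
      (Icc (0:ℝ) T ×ˢ (univ : Set (X × X))))
    (gt : ℝ → X → X → W) (gu gξ : ℝ → X → X → (X →L[ℝ] W))
    (hgt : ∀ (uu ξξ : X), ∀ t ∈ Icc (0:ℝ) T,
      HasDerivWithinAt (fun τ => g τ uu ξξ) (gt t uu ξξ) (Icc 0 T) t)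
    (hgu : ∀ (t : ℝ) (uu ξξ : X), HasFDerivAt (fun v => g t v ξξ) (gu t uu ξξ) uu)
    (hgxi : ∀ (t : ℝ) (uu ξξ : X), HasFDerivAt (fun v => g t uu v) (gξ t uu ξξ) ξξ)
    (γ ω Cξ Cu : ℝ) (hγ : 0 < γ) (hω : 0 < ω) (hCξ : 0 < Cξ) (hCu : 0 < Cu)
    (a b : ℝ → ℝ) (ha : IntegrableOn a (Ioo 0 T)) (hb : IntegrableOn b (Ioo 0 T))
    (hbd₁ : ∀ (t : ℝ) (uu ξξ : X), ‖gξ t uu ξξ‖ ≤ γ)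
    (hbd₂ : ∀ (t : ℝ) (uu ξξ : X), ‖gu t uu ξξ‖ ≤ ω)
    (hbd₃ : ∀ᵐ t ∂(volume.restrict (Ioo 0 T)), ∀ (uu ξξ : X), ‖gt t uu ξξ‖ ≤ a t)
    (hlip₁ : ∀ (t : ℝ) (uu ξξ vv ηη : X),
      ‖gξ t uu ξξ - gξ t vv ηη‖ ≤ Cξ * (‖uu - vv‖ + ‖ξξ - ηη‖))
    (hlip₂ : ∀ (t : ℝ) (uu ξξ vv ηη : X),
      ‖gu t uu ξξ - gu t vv ηη‖ ≤ Cu * (‖uu - vv‖ + ‖ξξ - ηη‖))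
    (hlip₃ : ∀ᵐ t ∂(volume.restrict (Ioo 0 T)), ∀ (uu ξξ vv ηη : X),
      ‖gt t uu ξξ - gt t vv ηη‖ ≤ b t * (‖uu - vv‖ + ‖ξξ - ηη‖))
    (hδ : K₁ * γ / c < 1)
    (u u' : ℝ → X) (hu : IsW11 T u u')
    (x₀ : X) (hx₀ : x₀ ∈ Zs (g 0 (u 0) (u 0 - x₀)))
    (ξ ξ' : ℝ → X) (hξ : IsW11 T ξ ξ')
    (hsol : IsSGPSol T (c / lam) Zs g u x₀ ξ ξ') :
    ∀ᵐ t ∂(volume.restrict (Ioo 0 T)),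
      ‖ξ' t‖ ≤ 1 / (1 - K₁ * γ / c) *
        ((1 + ω * K₁ / c) * ‖u' t‖ + K₁ / c * a t) := by

  obtain ⟨hmem, hx0mem, hVIae⟩ := hsol
  -- line derivatives of G
  have hGxline : ∀ (w : W) (x y : X), HasDerivAt (fun ε : ℝ => G (x + ε • y) w) ⟪Gx x w, y⟫ 0 :=
    fun w x y => hasDerivAt_line_of_tendsto_slope (fun x => G x w) x y _ (hgradxall x w y)
  have hGwline : ∀ (x : X) (w v : W), HasDerivAt (fun ε : ℝ => G x (w + ε • v)) (Gw x w v) 0 :=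
    fun x w v => hasDerivAt_line_of_tendsto_slope (fun w' => G x w') w v _ (hgradw x w v)
  -- quadratic expansion of G in x
  have qx : ∀ (w : W) (x h : X), ‖G (x + h) w - G x w - ⟪Gx x w, h⟫‖ ≤ C₀ * ‖h‖ ^ 2 := by
    intro w x h
    refine line_quad_bound (fun x => G x w) (fun x => innerSL ℝ (Gx x w)) C₀ hC₀.le
      (fun x y => by simpa using hGxline w x y) (fun x x' => ?_) x h
    have h1 : innerSL ℝ (Gx x w) - innerSL ℝ (Gx x' w) = innerSL ℝ (Gx x w - Gx x' w) := by
      simp [map_sub]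
    rw [h1, innerSL_apply_norm]
    simpa using hlipx x x' w w
  -- quadratic expansion of G in w
  have qw : ∀ (x : X) (w k : W), ‖G x (w + k) - G x w - Gw x w k‖ ≤ C₁ * ‖k‖ ^ 2 := by
    intro x w k
    refine line_quad_bound (fun w => G x w) (fun w => (Gw x w : W →L[ℝ] ℝ)) C₁ hC₁.le
      (fun w v => hGwline x w v) (fun w w' => ?_) w k
    simpa using hlipw x x w w'
  -- joint derivative of G
  have hGpair : ∀ (x : X) (w : W), HasFDerivAt (fun p : X × W => G p.1 p.2)
      ((innerSL ℝ (Gx x w)).comp (ContinuousLinearMap.fst ℝ X W) +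
        (Gw x w : W →L[ℝ] ℝ).comp (ContinuousLinearMap.snd ℝ X W)) (x, w) := by
    intro x w
    refine joint_hasFDerivAt G (fun x w => innerSL ℝ (Gx x w)) (fun x w => (Gw x w : W →L[ℝ] ℝ))
      C₀ C₀ C₁ hC₀.le hC₀.le hC₁.le (fun x y h => by simpa using qx y x h)
      (fun x y k => by simpa using qw x y k) (fun x y y' => ?_) x w
    have h1 : innerSL ℝ (Gx x y) - innerSL ℝ (Gx x y') = innerSL ℝ (Gx x y - Gx x y') := by
      simp [map_sub]
    rw [h1, innerSL_apply_norm]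
    simpa using hlipx x x y y'
  -- joint derivative of g in the space variables
  have hgpair : ∀ (τ : ℝ) (v η : X), HasFDerivAt (fun p : X × X => g τ p.1 p.2)
      ((gu τ v η).comp (ContinuousLinearMap.fst ℝ X X) +
        (gξ τ v η).comp (ContinuousLinearMap.snd ℝ X X)) (v, η) := by
    intro τ v η
    refine joint_hasFDerivAt (fun v η => g τ v η) (gu τ) (gξ τ) Cu Cu Cξ hCu.le hCu.le hCξ.le
      ?_ ?_ ?_ v η
    · intro x y h
      refine line_quad_bound (fun v => g τ v y) (fun v => gu τ v y) Cu hCu.le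
        (fun v k => hasDerivAt_line_of_fderiv (fun v => g τ v y) (gu τ v y) v k (hgu τ v y))
        (fun v v' => by simpa using hlip₂ τ v y v' y) x h
    · intro x y k
      refine line_quad_bound (fun η => g τ x η) (fun η => gξ τ x η) Cξ hCξ.le
        (fun η k => hasDerivAt_line_of_fderiv (fun η => g τ x η) (gξ τ x η) η k (hgxi τ x η))
        (fun η η' => by simpa using hlip₁ τ x η x η') y k
    · intro x y y'
      simpa using hlip₂ τ x y x y'
  -- integrability of gt
  haveI : SecondCountableTopologyEither ℝ W := ⟨Or.inl inferInstance⟩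
  have hgtint : ∀ uu ξξ : X, IntegrableOn (fun τ => gt τ uu ξξ) (Ioo 0 T) := by
    intro uu ξξ
    have hmeasg : AEStronglyMeasurable (fun τ => gt τ uu ξξ) (volume.restrict (Ioo 0 T)) := by
      apply (stronglyMeasurable_deriv (fun τ => g τ uu ξξ)).aestronglyMeasurable.congr
      filter_upwards [ae_restrict_mem measurableSet_Ioo] with τ hτ
      exact ((hgt uu ξξ τ (Ioo_subset_Icc_self hτ)).hasDerivAt (Icc_mem_nhds hτ.1 hτ.2)).deriv
    apply Integrable.mono' ha hmeasg
    filter_upwards [hbd₃] with τ hτ using hτ uu ξξ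
  have hud := isW11_ae_hasDerivAt hu
  have hξd := isW11_ae_hasDerivAt hξ
  filter_upwards [hud, hξd, hVIae, hbd₃, ae_restrict_mem measurableSet_Ioo]
    with t hut hξt hVI hbd3t htI
  have hanng : 0 ≤ a t := le_trans (norm_nonneg (gt t 0 0)) (hbd3t 0 0)
  have hδpos : 0 < 1 - K₁ * γ / c := by linarith
  have hδnn : 0 < K₁ * γ / c := by positivity
  by_cases hξ'0 : ξ' t = 0
  · rw [hξ'0, norm_zero]
    have h1 : (0:ℝ) < 1 / (1 - K₁ * γ / c) := by positivity
    have h2 : (0:ℝ) ≤ (1 + ω * K₁ / c) * ‖u' t‖ + K₁ / c * a t := by positivity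
    positivity
  · set x0 := u t - ξ t with hx0def
    set w0 := g t (u t) (ξ t) with hw0def
    have hmemt : x0 ∈ Zs w0 := hmem t (Ioo_subset_Icc_self htI)
    have hG1le : G x0 w0 ≤ 1 := by rw [hZ] at hmemt; exact hmemt
    have rpos : (0:ℝ) < c / lam := div_pos hc hlam
    -- directional consequence of the variational inequality
    have hdirle : ∀ (v : X) (ε₀ : ℝ), 0 < ε₀ →
        (∀ ε : ℝ, 0 < ε → ε ≤ ε₀ → G (x0 + ε • v) w0 ≤ 1) → ⟪v, ξ' t⟫ ≤ 0 := by
      intro v ε₀ hε₀ hball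
      by_contra hpos
      push_neg at hpos
      set P := ⟪v, ξ' t⟫ with hP
      set Cq := ‖ξ' t‖ / (2 * (c / lam)) * ‖v‖ ^ 2 with hCq
      have hCqnn : 0 ≤ Cq := by positivity
      set ε := min ε₀ (P / (2 * (Cq + 1))) with hεdef
      have hεpos : 0 < ε := lt_min hε₀ (by positivity)
      have hεle : ε ≤ ε₀ := min_le_left _ _
      have hεle2 : ε ≤ P / (2 * (Cq + 1)) := min_le_right _ _
      have hz : (x0 + ε • v) ∈ Zs w0 := by
        rw [hZ]
        exact hball ε hεpos hεle
      have hvi := hVI (x0 + ε • v) hz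
      have he1 : x0 - (x0 + ε • v) = -(ε • v) := by abel
      rw [he1] at hvi
      rw [inner_neg_left, real_inner_smul_left, norm_neg, norm_smul] at hvi
      have hne : ‖ε • v‖ = ε * ‖v‖ := by
        rw [norm_smul, Real.norm_eq_abs, abs_of_pos hεpos]
      have hvi2 : -(ε * P) + ‖ξ' t‖ / (2 * (c / lam)) * (ε * ‖v‖) ^ 2 ≥ 0 := by
        calc -(ε * P) + ‖ξ' t‖ / (2 * (c / lam)) * (ε * ‖v‖) ^ 2
            = -(ε * ⟪v, ξ' t⟫) + ‖ξ' t‖ / (2 * (c / lam)) * (‖ε‖ * ‖v‖) ^ 2 := by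
              rw [Real.norm_eq_abs, abs_of_pos hεpos]
          _ ≥ 0 := hvi
      have hvi3 : P ≤ Cq * ε := by
        have hexp : ε * (Cq * ε) = ‖ξ' t‖ / (2 * (c / lam)) * (ε * ‖v‖) ^ 2 := by
          rw [hCq]; ring
        have h6 : ε * P ≤ ε * (Cq * ε) := by rw [hexp]; linarith [hvi2]
        exact le_of_mul_le_mul_left h6 hεpos
      have h7 : Cq * ε ≤ Cq * (P / (2 * (Cq + 1))) :=
        mul_le_mul_of_nonneg_left hεle2 hCqnn
      have h8 : Cq * (P / (2 * (Cq + 1))) < P := by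
        rw [mul_div_assoc']
        rw [div_lt_iff₀ (by positivity)]
        nlinarith
      linarith
    -- the state lies on the boundary
    have hG1 : G x0 w0 = 1 := by
      by_contra hne
      have hlt : G x0 w0 < 1 := lt_of_le_of_ne hG1le hne
      have hall : ∀ v : X, ⟪v, ξ' t⟫ ≤ 0 := by
        intro v
        set d := 1 - G x0 w0 with hd
        have hdpos : 0 < d := by simp [hd]; linarith
        set M := K₀ * ‖v‖ + C₀ * ‖v‖ ^ 2 with hM
        have hMnn : 0 ≤ M := by positivity
        apply hdirle v (min 1 (d / (M + 1))) (lt_min one_pos (by positivity))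
        intro ε hε1 hε2
        have hq := qx w0 x0 (ε • v)
        rw [Real.norm_eq_abs] at hq
        have hip : ⟪Gx x0 w0, ε • v⟫ ≤ ε * (K₀ * ‖v‖) := by
          rw [real_inner_smul_right]
          have h1 := real_inner_le_norm (Gx x0 w0) v
          have h2 := hbdx x0 w0
          have h3 : ⟪Gx x0 w0, v⟫ ≤ K₀ * ‖v‖ :=
            le_trans h1 (mul_le_mul_of_nonneg_right h2 (norm_nonneg v))
          exact mul_le_mul_of_nonneg_left h3 hε1.le
        have hsm : ‖ε • v‖ ^ 2 = ε ^ 2 * ‖v‖ ^ 2 := by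
          rw [norm_smul, Real.norm_eq_abs, abs_of_pos hε1]
          ring
        have hεle1 : ε ≤ 1 := le_trans hε2 (min_le_left _ _)
        have hεled : ε ≤ d / (M + 1) := le_trans hε2 (min_le_right _ _)
        have hεd : ε * (M + 1) ≤ d := (le_div_iff₀ (by positivity)).1 hεled
        have habs := (abs_le.1 hq).2
        rw [hsm] at habs
        have h1 : G (x0 + ε • v) w0 ≤ G x0 w0 + ε * (K₀ * ‖v‖) + C₀ * (ε ^ 2 * ‖v‖ ^ 2) := by
          linarith [habs, hip]
        have h2 : C₀ * (ε ^ 2 * ‖v‖ ^ 2) ≤ ε * (C₀ * ‖v‖ ^ 2) := by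
          nlinarith [mul_nonneg (mul_nonneg (sub_nonneg.2 hεle1) hε1.le)
            (mul_nonneg hC₀.le (sq_nonneg ‖v‖))]
        have hεd' : ε * (K₀ * ‖v‖) + ε * (C₀ * ‖v‖ ^ 2) + ε ≤ d := by
          have h3 := hεd
          rw [hM] at h3
          nlinarith [h3]
        linarith [h1, h2, hεd', hε1]
      have h1 := hall (ξ' t)
      rw [real_inner_self_eq_norm_sq] at h1
      have h2 : ‖ξ' t‖ = 0 := by nlinarith [norm_nonneg (ξ' t)]
      exact hξ'0 (norm_eq_zero.1 h2)
    set n := Gx x0 w0 with hndef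
    have hnc : c ≤ ‖n‖ := hyp1 x0 w0 hG1
    have hn0 : n ≠ 0 := by
      intro h
      rw [h, norm_zero] at hnc
      linarith
    -- half-space property
    have hhalf : ∀ v : X, ⟪n, v⟫ < 0 → ⟪v, ξ' t⟫ ≤ 0 := by
      intro v hv
      apply hdirle v ((-⟪n, v⟫) / (C₀ * ‖v‖ ^ 2 + 1)) (div_pos (by linarith) (by positivity))
      intro ε hε1 hε2
      have hq := qx w0 x0 (ε • v)
      rw [Real.norm_eq_abs] at hq
      have habs := (abs_le.1 hq).2
      have hip : ⟪Gx x0 w0, ε • v⟫ = ε * ⟪n, v⟫ := by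
        rw [real_inner_smul_right, hndef]
      have hsm : ‖ε • v‖ ^ 2 = ε ^ 2 * ‖v‖ ^ 2 := by
        rw [norm_smul, Real.norm_eq_abs, abs_of_pos hε1]
        ring
      have hεb : ε * (C₀ * ‖v‖ ^ 2 + 1) ≤ -⟪n, v⟫ := by
        rw [← le_div_iff₀ (by positivity)]
        exact hε2
      have hεsq : ε * (C₀ * ε * ‖v‖ ^ 2) ≤ ε * (-⟪n, v⟫) := by
        apply mul_le_mul_of_nonneg_left _ hε1.le
        nlinarith [hεb, hε1]
      rw [hG1] at habs
      nlinarith [habs, hip, hsm, hεsq, hε1]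
    obtain ⟨hκnn, hκeq⟩ := eq_smul_of_halfspace n (ξ' t) hn0 hhalf
    -- derivative of θ
    have hθ := theta_hasDerivAt T g gt b hgt hb hgtint hlip₃ u ξ (u' t) (ξ' t) t htI hut hξt
      _ (hgpair t (u t) (ξ t))
    set θ'v := gt t (u t) (ξ t) +
      ((gu t (u t) (ξ t)).comp (ContinuousLinearMap.fst ℝ X X) +
        (gξ t (u t) (ξ t)).comp (ContinuousLinearMap.snd ℝ X X)) (u' t, ξ' t) with hθ'def
    have hθ'bd : ‖θ'v‖ ≤ a t + ω * ‖u' t‖ + γ * ‖ξ' t‖ := by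
      have e1 : ((gu t (u t) (ξ t)).comp (ContinuousLinearMap.fst ℝ X X) +
          (gξ t (u t) (ξ t)).comp (ContinuousLinearMap.snd ℝ X X)) (u' t, ξ' t)
          = gu t (u t) (ξ t) (u' t) + gξ t (u t) (ξ t) (ξ' t) := by
        simp
      rw [hθ'def, e1]
      have b1 : ‖gt t (u t) (ξ t)‖ ≤ a t := hbd3t _ _
      have b2 : ‖gu t (u t) (ξ t) (u' t)‖ ≤ ω * ‖u' t‖ :=
        le_trans (ContinuousLinearMap.le_opNorm _ _)
          (mul_le_mul_of_nonneg_right (hbd₂ t _ _) (norm_nonneg _))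
      have b3 : ‖gξ t (u t) (ξ t) (ξ' t)‖ ≤ γ * ‖ξ' t‖ :=
        le_trans (ContinuousLinearMap.le_opNorm _ _)
          (mul_le_mul_of_nonneg_right (hbd₁ t _ _) (norm_nonneg _))
      calc ‖gt t (u t) (ξ t) + (gu t (u t) (ξ t) (u' t) + gξ t (u t) (ξ t) (ξ' t))‖
          ≤ ‖gt t (u t) (ξ t)‖ + ‖gu t (u t) (ξ t) (u' t)‖ + ‖gξ t (u t) (ξ t) (ξ' t)‖ := by
            refine le_trans (norm_add_le _ _) ?_
            linarith [norm_add_le (gu t (u t) (ξ t) (u' t)) (gξ t (u t) (ξ t) (ξ' t))]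
        _ ≤ a t + ω * ‖u' t‖ + γ * ‖ξ' t‖ := by linarith
    -- derivative of φ
    have hφ : HasDerivAt (fun s => G (u s - ξ s) (g s (u s) (ξ s)))
        (⟪n, u' t - ξ' t⟫ + Gw x0 w0 θ'v) t := by
      have hx : HasDerivAt (fun s => (u s - ξ s, g s (u s) (ξ s))) ((u' t - ξ' t, θ'v)) t :=
        (hut.sub hξt).prodMk hθ
      have hc0 : HasFDerivAt (fun p : X × W => G p.1 p.2)
          ((innerSL ℝ (Gx x0 w0)).comp (ContinuousLinearMap.fst ℝ X W) +
            (Gw x0 w0 : W →L[ℝ] ℝ).comp (ContinuousLinearMap.snd ℝ X W))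
          ((fun s => (u s - ξ s, g s (u s) (ξ s))) t) := hGpair x0 w0
      have := hc0.comp_hasDerivAt t hx
      simpa [Function.comp_def] using this
    have hmax : IsLocalMax (fun s => G (u s - ξ s) (g s (u s) (ξ s))) t := by
      filter_upwards [isOpen_Ioo.eventually_mem htI] with s hs
      have hzs : u s - ξ s ∈ Zs (g s (u s) (ξ s)) := hmem s (Ioo_subset_Icc_self hs)
      rw [hZ] at hzs
      calc G (u s - ξ s) (g s (u s) (ξ s)) ≤ 1 := hzs
        _ = G (u t - ξ t) (g t (u t) (ξ t)) := hG1.symm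
    have hD0 : ⟪n, u' t - ξ' t⟫ + Gw x0 w0 θ'v = 0 := by
      rw [← hφ.deriv]
      exact hmax.deriv_eq_zero
    -- final arithmetic
    have hGwbd : Gw x0 w0 θ'v ≤ K₁ * (a t + ω * ‖u' t‖ + γ * ‖ξ' t‖) := by
      calc Gw x0 w0 θ'v ≤ ‖Gw x0 w0 θ'v‖ := le_abs_self _
        _ ≤ ‖Gw x0 w0‖ * ‖θ'v‖ := ContinuousLinearMap.le_opNorm _ _
        _ ≤ K₁ * (a t + ω * ‖u' t‖ + γ * ‖ξ' t‖) :=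
            mul_le_mul (hbdw x0 w0) hθ'bd (norm_nonneg _) hK₁.le
    have hinner : ⟪n, ξ' t⟫ = ‖ξ' t‖ * ‖n‖ := by
      rw [hκeq, real_inner_smul_right, real_inner_self_eq_norm_sq, norm_smul, Real.norm_eq_abs,
        abs_of_nonneg (by positivity)]
      ring
    have hiu : ⟪n, u' t⟫ ≤ ‖n‖ * ‖u' t‖ := real_inner_le_norm _ _
    have hkey : ‖ξ' t‖ * ‖n‖ ≤ ‖n‖ * ‖u' t‖ + K₁ * (a t + ω * ‖u' t‖ + γ * ‖ξ' t‖) := by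
      rw [inner_sub_right] at hD0
      rw [hinner] at hD0
      linarith
    have hApos : 0 ≤ K₁ * (a t + ω * ‖u' t‖ + γ * ‖ξ' t‖) := by positivity
    have key2 : (1 - K₁ * γ / c) * ‖ξ' t‖ ≤ (1 + ω * K₁ / c) * ‖u' t‖ + K₁ / c * a t := by
      have hcmul : c * ((1 - K₁ * γ / c) * ‖ξ' t‖) ≤
          c * ((1 + ω * K₁ / c) * ‖u' t‖ + K₁ / c * a t) := by
        have e1 : c * ((1 - K₁ * γ / c) * ‖ξ' t‖) = c * ‖ξ' t‖ - K₁ * γ * ‖ξ' t‖ := by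
          field_simp
        have e2 : c * ((1 + ω * K₁ / c) * ‖u' t‖ + K₁ / c * a t)
            = c * ‖u' t‖ + ω * K₁ * ‖u' t‖ + K₁ * a t := by
          field_simp
        rw [e1, e2]
        rcases le_or_gt ‖ξ' t‖ ‖u' t‖ with hle | hlt
        · nlinarith [norm_nonneg (u' t), norm_nonneg (ξ' t), hanng]
        · have h5 : c * (‖ξ' t‖ - ‖u' t‖) ≤ ‖n‖ * (‖ξ' t‖ - ‖u' t‖) :=
            mul_le_mul_of_nonneg_right hnc (by linarith)
          nlinarith [hkey, h5]
      exact le_of_mul_le_mul_left hcmul hc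
    rw [one_div, inv_mul_eq_div, le_div_iff₀ hδpos]
    linarith [key2]
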